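/- For every positive integer s, Klee's function Φ_s is multiplicative in n: for all coprime positive integers m and n, Φ_s(m·n) = Φ_s(m) · Φ_s(n). -/

import Mathlib

/-- The generalized gcd of a nonnegative integer `n` at level `s`: the largest
`s`-th power `l ^ s` (with `l ≥ 1`) dividing `n`.  Applying it to `n = gcd(a, b)`
gives the generalized gcd `(a, b)_s` of the paper. -/
def sPowGcd (s n : ℕ) : ℕ := (Nat.findGreatest (fun l => l ^ s ∣ n) n) ^ s

/-- Klee's function `Φ_s(n)`: the number of `1 ≤ m ≤ n` with `(m, n)_s = 1`. -/
def klee (s n : ℕ) : ℕ :=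
  ((Finset.Icc 1 n).filter (fun m => sPowGcd s (Nat.gcd m n) = 1)).card

lemma sPowGcd_eq_one_iff {s : ℕ} (hs : 0 < s) {g : ℕ} (hg : 0 < g) :
    sPowGcd s g = 1 ↔ ∀ l, 2 ≤ l → ¬ l ^ s ∣ g := by
  unfold sPowGcd
  have h1 : 1 ≤ Nat.findGreatest (fun l => l ^ s ∣ g) g :=
    Nat.le_findGreatest hg (by simp)
  rw [pow_eq_one_iff, or_iff_left hs.ne']
  constructor
  · intro h l hl hdvd
    have hls : l ≤ g := le_trans (Nat.le_self_pow hs.ne' l) (Nat.le_of_dvd hg hdvd)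
    have := Nat.le_findGreatest (P := fun l => l ^ s ∣ g) hls hdvd
    omega
  · intro h
    by_contra hne
    have h2 : 2 ≤ Nat.findGreatest (fun l => l ^ s ∣ g) g := by omega
    have hspec : (Nat.findGreatest (fun l => l ^ s ∣ g) g) ^ s ∣ g :=
      Nat.findGreatest_spec (P := fun l => l ^ s ∣ g) hg (by simp)
    exact h _ h2 hspec

lemma sPowGcd_eq_one_iff_prime {s : ℕ} (hs : 0 < s) {g : ℕ} (hg : 0 < g) :
    sPowGcd s g = 1 ↔ ∀ p : ℕ, p.Prime → ¬ p ^ s ∣ g := by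
  rw [sPowGcd_eq_one_iff hs hg]
  constructor
  · intro h p hp
    exact h p hp.two_le
  · intro h l hl hdvd
    have hp := Nat.minFac_prime (by omega : l ≠ 1)
    exact h _ hp (dvd_trans (pow_dvd_pow_of_dvd (Nat.minFac_dvd l) s) hdvd)

lemma klee_eq_range {s n : ℕ} (hn : 0 < n) :
    klee s n = ((Finset.range n).filter (fun m => sPowGcd s (Nat.gcd m n) = 1)).card := by
  unfold klee
  apply Finset.card_bij' (fun x _ => x % n) (fun y _ => if y = 0 then n else y)
  · intro x hx
    simp only [Finset.mem_filter, Finset.mem_Icc] at hx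
    simp only [Finset.mem_filter, Finset.mem_range]
    refine ⟨Nat.mod_lt _ hn, ?_⟩
    rw [← hx.2]
    congr 1
    conv_rhs => rw [Nat.gcd_comm, Nat.gcd_rec]
  · intro y hy
    simp only [Finset.mem_filter, Finset.mem_range] at hy
    simp only [Finset.mem_filter, Finset.mem_Icc]
    by_cases h0 : y = 0
    · subst h0
      refine ⟨⟨hn, le_refl n⟩, ?_⟩
      rw [← hy.2]
      simp [Nat.gcd_self]
    · simp only [if_neg h0]
      exact ⟨⟨by omega, le_of_lt hy.1⟩, hy.2⟩
  · intro x hx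
    simp only [Finset.mem_filter, Finset.mem_Icc] at hx
    rcases eq_or_lt_of_le hx.1.2 with h | h
    · simp [h]
    · rw [Nat.mod_eq_of_lt h, if_neg (by omega)]
  · intro y hy
    simp only [Finset.mem_filter, Finset.mem_range] at hy
    by_cases h0 : y = 0
    · simp [h0]
    · rw [if_neg h0, Nat.mod_eq_of_lt hy.1]

lemma split_cond {s : ℕ} (hs : 0 < s) {m n : ℕ} (hm : 0 < m) (hn : 0 < n)
    (hmn : Nat.Coprime m n) (x : ℕ) :
    sPowGcd s (Nat.gcd x (m * n)) = 1 ↔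
      sPowGcd s (Nat.gcd x m) = 1 ∧ sPowGcd s (Nat.gcd x n) = 1 := by
  have hmn0 : 0 < m * n := Nat.mul_pos hm hn
  rw [sPowGcd_eq_one_iff_prime hs (Nat.gcd_pos_of_pos_right _ hmn0),
      sPowGcd_eq_one_iff_prime hs (Nat.gcd_pos_of_pos_right _ hm),
      sPowGcd_eq_one_iff_prime hs (Nat.gcd_pos_of_pos_right _ hn)]
  constructor
  · intro h
    constructor
    · intro p hp hdvd
      exact h p hp (Nat.dvd_gcd (dvd_trans hdvd (Nat.gcd_dvd_left _ _))
        (dvd_trans (dvd_trans hdvd (Nat.gcd_dvd_right _ _)) (dvd_mul_right m n)))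
    · intro p hp hdvd
      exact h p hp (Nat.dvd_gcd (dvd_trans hdvd (Nat.gcd_dvd_left _ _))
        (dvd_trans (dvd_trans hdvd (Nat.gcd_dvd_right _ _)) (dvd_mul_left n m)))
  · rintro ⟨h1, h2⟩ p hp hdvd
    have hx : p ^ s ∣ x := dvd_trans hdvd (Nat.gcd_dvd_left _ _)
    have hmul : p ^ s ∣ m * n := dvd_trans hdvd (Nat.gcd_dvd_right _ _)
    by_cases hpm : p ∣ m
    · have hcop : Nat.Coprime p n := Nat.Coprime.coprime_dvd_left hpm hmn
      have : p ^ s ∣ m := (Nat.Coprime.pow_left s hcop).dvd_of_dvd_mul_right hmul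
      exact h1 p hp (Nat.dvd_gcd hx this)
    · have hcop : Nat.Coprime p m := (Nat.Prime.coprime_iff_not_dvd hp).mpr hpm
      have : p ^ s ∣ n := (Nat.Coprime.pow_left s hcop).dvd_of_dvd_mul_left hmul
      exact h2 p hp (Nat.dvd_gcd hx this)

theorem stmt_10 (s : ℕ) (hs : 0 < s) :
    ∀ m n : ℕ, 0 < m → 0 < n → Nat.Coprime m n → klee s (m * n) = klee s m * klee s n := by
  intro m n hm hn hmn
  rw [klee_eq_range (Nat.mul_pos hm hn), klee_eq_range hm, klee_eq_range hn,
      ← Finset.card_product, ← Finset.filter_product]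
  apply Finset.card_bij' (fun x _ => (x % m, x % n))
    (fun p _ => (Nat.chineseRemainder hmn p.1 p.2 : ℕ))
  · intro x hx
    simp only [Finset.mem_filter, Finset.mem_range] at hx
    simp only [Finset.mem_filter, Finset.mem_product, Finset.mem_range]
    have h1 : Nat.gcd (x % m) m = Nat.gcd x m := by
      conv_rhs => rw [Nat.gcd_comm, Nat.gcd_rec]
    have h2 : Nat.gcd (x % n) n = Nat.gcd x n := by
      conv_rhs => rw [Nat.gcd_comm, Nat.gcd_rec]
    refine ⟨⟨Nat.mod_lt _ hm, Nat.mod_lt _ hn⟩, ?_⟩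
    rw [h1, h2]
    exact (split_cond hs hm hn hmn x).mp hx.2
  · intro p hp
    simp only [Finset.mem_filter, Finset.mem_product, Finset.mem_range] at hp
    simp only [Finset.mem_filter, Finset.mem_range]
    set y := (Nat.chineseRemainder hmn p.1 p.2 : ℕ) with hy
    have hmod := (Nat.chineseRemainder hmn p.1 p.2).2
    have hlt : y < m * n := Nat.chineseRemainder_lt_mul hmn p.1 p.2 hm.ne' hn.ne'
    refine ⟨hlt, ?_⟩
    rw [split_cond hs hm hn hmn]
    have e1 : Nat.gcd y m = Nat.gcd p.1 m := by
      conv_lhs => rw [Nat.gcd_comm, Nat.gcd_rec]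
      conv_rhs => rw [Nat.gcd_comm, Nat.gcd_rec]
      rw [show y % m = p.1 % m from hmod.1]
    have e2 : Nat.gcd y n = Nat.gcd p.2 n := by
      conv_lhs => rw [Nat.gcd_comm, Nat.gcd_rec]
      conv_rhs => rw [Nat.gcd_comm, Nat.gcd_rec]
      rw [show y % n = p.2 % n from hmod.2]
    rw [e1, e2]
    exact hp.2
  · intro x hx
    simp only [Finset.mem_filter, Finset.mem_range] at hx
    have hmod := (Nat.chineseRemainder hmn (x % m) (x % n)).2
    have hlt : (Nat.chineseRemainder hmn (x % m) (x % n) : ℕ) < m * n :=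
      Nat.chineseRemainder_lt_mul hmn _ _ hm.ne' hn.ne'
    have h1 : (Nat.chineseRemainder hmn (x % m) (x % n) : ℕ) ≡ x [MOD m] :=
      hmod.1.trans (Nat.mod_modEq x m)
    have h2 : (Nat.chineseRemainder hmn (x % m) (x % n) : ℕ) ≡ x [MOD n] :=
      hmod.2.trans (Nat.mod_modEq x n)
    have := (Nat.modEq_and_modEq_iff_modEq_mul hmn).mp ⟨h1, h2⟩
    have := this.eq_of_lt_of_lt hlt hx.1
    exact this
  · intro p hp
    simp only [Finset.mem_filter, Finset.mem_product, Finset.mem_range] at hp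
    have hmod := (Nat.chineseRemainder hmn p.1 p.2).2
    have e1 : (Nat.chineseRemainder hmn p.1 p.2 : ℕ) % m = p.1 := by
      have := hmod.1
      rwa [Nat.ModEq, Nat.mod_eq_of_lt hp.1.1] at this
    have e2 : (Nat.chineseRemainder hmn p.1 p.2 : ℕ) % n = p.2 := by
      have := hmod.2
      rwa [Nat.ModEq, Nat.mod_eq_of_lt hp.1.2] at this
    rw [e1, e2]
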